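/- There exists a constant C₂ > 0 such that for all u ∈ H and v ∈ V, the sequence B(u, v) belongs to H and |B(u, v)| ≤ C₂ |u| ‖v‖. -/

import Mathlib

open Complex MeasureTheory Filter Topology

noncomputable section

/-- The wave numbers `kₙ = k₀ · 2ⁿ`. -/
def kk (k₀ : ℝ) (n : ℕ) : ℝ := k₀ * 2 ^ n

/-- The GOY nonlinearity `B(u,v)ₙ`; sequences are indexed from `1`, with the
convention that the `0`-th entry (playing the role of `u₀ = u₋₁ = 0`) vanishes. -/
def goyB (k₀ : ℝ) (u v : ℕ → ℂ) (n : ℕ) : ℂ :=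
  if n = 0 then 0 else
    Complex.I * (kk k₀ n : ℂ) *
      ((1 / 4) * (starRingEnd ℂ) (u (n + 1)) * (starRingEnd ℂ) (v (n - 1))
        - (1 / 2) * ((starRingEnd ℂ) (u (n + 1)) * (starRingEnd ℂ) (v (n + 2))
            + (starRingEnd ℂ) (u (n + 2)) * (starRingEnd ℂ) (v (n + 1)))
        + (1 / 8) * (starRingEnd ℂ) (u (n - 1)) * (starRingEnd ℂ) (v (n - 2)))

/-- Membership in `H`: square summability. -/
def memH (u : ℕ → ℂ) : Prop := Summable fun n => ‖u n‖ ^ 2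

/-- Membership in `V`. -/
def memV (k₀ : ℝ) (u : ℕ → ℂ) : Prop := Summable fun n => kk k₀ n ^ 2 * ‖u n‖ ^ 2

/-- `|u|² = ∑ₙ |uₙ|²`. -/
def hnormSq (u : ℕ → ℂ) : ℝ := ∑' n, ‖u n‖ ^ 2

/-- `‖u‖² = ∑ₙ kₙ²|uₙ|²`. -/
def vnormSq (k₀ : ℝ) (u : ℕ → ℂ) : ℝ := ∑' n, kk k₀ n ^ 2 * ‖u n‖ ^ 2

/-- `‖u‖_{V'}² = ∑ₙ kₙ⁻²|uₙ|²`. -/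
def vdualSq (k₀ : ℝ) (u : ℕ → ℂ) : ℝ := ∑' n, ‖u n‖ ^ 2 / kk k₀ n ^ 2

end


section Aux

lemma goyB_norm_le' (k₀ : ℝ) (hk₀ : 0 < k₀) (u v : ℕ → ℂ) (n : ℕ) (hn : n ≠ 0) :
    ‖goyB k₀ u v n‖ ≤ kk k₀ n * (1/4 * (‖u (n+1)‖ * ‖v (n-1)‖)
      + 1/2 * (‖u (n+1)‖ * ‖v (n+2)‖) + 1/2 * (‖u (n+2)‖ * ‖v (n+1)‖)
      + 1/8 * (‖u (n-1)‖ * ‖v (n-2)‖)) := by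
  unfold goyB
  rw [if_neg hn]
  set X := (1/4 : ℂ) * (starRingEnd ℂ) (u (n+1)) * (starRingEnd ℂ) (v (n-1)) with hXd
  set Y := (1/2 : ℂ) * ((starRingEnd ℂ) (u (n+1)) * (starRingEnd ℂ) (v (n+2))
      + (starRingEnd ℂ) (u (n+2)) * (starRingEnd ℂ) (v (n+1))) with hYd
  set Z := (1/8 : ℂ) * (starRingEnd ℂ) (u (n-1)) * (starRingEnd ℂ) (v (n-2)) with hZd
  have hX : ‖X‖ = 1/4 * (‖u (n+1)‖ * ‖v (n-1)‖) := by
    rw [hXd]; simp [norm_mul]; ring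
  have hZ : ‖Z‖ = 1/8 * (‖u (n-1)‖ * ‖v (n-2)‖) := by
    rw [hZd]; simp [norm_mul]; ring
  have hY : ‖Y‖ ≤ 1/2 * (‖u (n+1)‖ * ‖v (n+2)‖) + 1/2 * (‖u (n+2)‖ * ‖v (n+1)‖) := by
    rw [hYd, norm_mul]
    have := norm_add_le ((starRingEnd ℂ) (u (n+1)) * (starRingEnd ℂ) (v (n+2)))
      ((starRingEnd ℂ) (u (n+2)) * (starRingEnd ℂ) (v (n+1)))
    simp only [norm_mul, RCLike.norm_conj] at this ⊢
    have h12 : ‖(1/2 : ℂ)‖ = 1/2 := by norm_num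
    rw [h12]
    nlinarith [this]
  have hkn : 0 ≤ kk k₀ n := by unfold kk; positivity
  have hnorm : ‖Complex.I * ((kk k₀ n : ℝ) : ℂ) * (X - Y + Z)‖ = kk k₀ n * ‖X - Y + Z‖ := by
    rw [norm_mul, norm_mul, Complex.norm_I, one_mul, Complex.norm_real,
      Real.norm_eq_abs, _root_.abs_of_nonneg hkn]
  rw [hnorm]
  have htr : ‖X - Y + Z‖ ≤ ‖X‖ + ‖Y‖ + ‖Z‖ :=
    (norm_add_le _ _).trans (add_le_add_left (norm_sub_le _ _) _)
  have : ‖X - Y + Z‖ ≤ 1/4 * (‖u (n+1)‖ * ‖v (n-1)‖)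
      + 1/2 * (‖u (n+1)‖ * ‖v (n+2)‖) + 1/2 * (‖u (n+2)‖ * ‖v (n+1)‖)
      + 1/8 * (‖u (n-1)‖ * ‖v (n-2)‖) := by
    rw [hX, hZ] at htr; linarith
  exact mul_le_mul_of_nonneg_left this hkn

lemma kk_nonneg {k₀ : ℝ} (hk₀ : 0 < k₀) (n : ℕ) : 0 ≤ kk k₀ n := by
  unfold kk; positivity

lemma goyB_norm_le (k₀ : ℝ) (hk₀ : 0 < k₀) (u v : ℕ → ℂ) (hu0 : u 0 = 0) (n : ℕ) :
    ‖goyB k₀ u v n‖ ≤ (1/2) * (‖u (n+1)‖ * (kk k₀ (n-1) * ‖v (n-1)‖)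
      + ‖u (n+1)‖ * (kk k₀ (n+2) * ‖v (n+2)‖)
      + ‖u (n+2)‖ * (kk k₀ (n+1) * ‖v (n+1)‖)
      + ‖u (n-1)‖ * (kk k₀ (n-2) * ‖v (n-2)‖)) := by
  have hkk : ∀ m, 0 ≤ kk k₀ m := kk_nonneg hk₀
  have hp : ∀ (a : ℕ) (b : ℕ), 0 ≤ ‖u a‖ * (kk k₀ b * ‖v b‖) := fun a b =>
    mul_nonneg (norm_nonneg _) (mul_nonneg (hkk b) (norm_nonneg _))
  match n with
  | 0 =>
    have h1 := hp (0+1) (0-1); have h2 := hp (0+1) (0+2)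
    have h3 := hp (0+2) (0+1); have h4 := hp (0-1) (0-2)
    rw [show goyB k₀ u v 0 = 0 from rfl, norm_zero]
    linarith
  | 1 =>
    have h := goyB_norm_le' k₀ hk₀ u v 1 one_ne_zero
    simp only [show (1:ℕ)-1 = 0 from rfl, show (1:ℕ)-2 = 0 from rfl,
      show (1:ℕ)+1 = 2 from rfl, show (1:ℕ)+2 = 3 from rfl, hu0, norm_zero] at h ⊢
    have e0 : kk k₀ 0 = k₀ := by simp [kk]
    have e1 : kk k₀ 1 = 2 * k₀ := by simp [kk]; ring
    have e2 : kk k₀ 2 = 4 * k₀ := by simp [kk]; norm_num; ring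
    have e3 : kk k₀ 3 = 8 * k₀ := by simp [kk]; norm_num; ring
    rw [e1] at h
    rw [e0, e3, e2]
    nlinarith [h, norm_nonneg (u 2), norm_nonneg (u 3),
      norm_nonneg (v 0), norm_nonneg (v 2), norm_nonneg (v 3),
      mul_nonneg (mul_nonneg hk₀.le (norm_nonneg (u 2))) (norm_nonneg (v 3)),
      mul_nonneg (mul_nonneg hk₀.le (norm_nonneg (u 3))) (norm_nonneg (v 2))]
  | (m+2) =>
    have h := goyB_norm_le' k₀ hk₀ u v (m+2) (by omega)
    simp only [show m+2-1 = m+1 from rfl, show m+2-2 = m from rfl,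
      show m+2+1 = m+3 from rfl, show m+2+2 = m+4 from rfl] at h ⊢
    have hK : 0 ≤ k₀ * 2^m := by positivity
    have e0 : kk k₀ (m+2) = 4 * (k₀ * 2^m) := by simp [kk, pow_add]; ring
    have e1 : kk k₀ (m+1) = 2 * (k₀ * 2^m) := by simp [kk, pow_add]; ring
    have e2 : kk k₀ (m+3) = 8 * (k₀ * 2^m) := by simp [kk, pow_add]; ring
    have e3 : kk k₀ (m+4) = 16 * (k₀ * 2^m) := by simp [kk, pow_add]; ring
    have e4 : kk k₀ m = k₀ * 2^m := rfl
    rw [e0] at h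
    rw [e1, e3, e2, e4]
    nlinarith [h, mul_nonneg (mul_nonneg hK (norm_nonneg (u (m+3)))) (norm_nonneg (v (m+4))),
      mul_nonneg (mul_nonneg hK (norm_nonneg (u (m+4)))) (norm_nonneg (v (m+3)))]

theorem stmt_3' (k₀ : ℝ) (hk₀ : 0 < k₀) (u v : ℕ → ℂ) (hu0 : u 0 = 0) (hv0 : v 0 = 0)
    (hu : Summable fun n => ‖u n‖ ^ 2) (hv : Summable fun n => kk k₀ n ^ 2 * ‖v n‖ ^ 2) :
      (Summable fun n => ‖goyB k₀ u v n‖ ^ 2) ∧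
      Real.sqrt (∑' n, ‖goyB k₀ u v n‖ ^ 2) ≤
        3 * Real.sqrt (∑' n, ‖u n‖ ^ 2) * Real.sqrt (∑' n, kk k₀ n ^ 2 * ‖v n‖ ^ 2) := by
  set A2 := ∑' n, ‖u n‖ ^ 2 with hA2
  set bsq : ℕ → ℝ := fun n => kk k₀ n ^ 2 * ‖v n‖ ^ 2 with hbsqd
  set B2 := ∑' n, bsq n with hB2
  have hbsq : Summable bsq := hv
  have hbsq_nonneg : ∀ m, 0 ≤ bsq m := fun m => mul_nonneg (sq_nonneg _) (sq_nonneg _)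
  have hA2nn : 0 ≤ A2 := tsum_nonneg fun n => sq_nonneg _
  have hB2nn : 0 ≤ B2 := tsum_nonneg hbsq_nonneg
  have hb1 : Summable (fun n => bsq (n - 1)) := by
    apply (summable_nat_add_iff 1).mp
    simpa using hbsq
  have hb2 : Summable (fun n => bsq (n - 2)) := by
    apply (summable_nat_add_iff 2).mp
    simpa using hbsq
  have hbp1 : Summable (fun n => bsq (n + 1)) := (summable_nat_add_iff 1).mpr hbsq
  have hbp2 : Summable (fun n => bsq (n + 2)) := (summable_nat_add_iff 2).mpr hbsq
  -- pointwise squared bound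
  have haj : ∀ m, ‖u m‖ ^ 2 ≤ A2 := fun m => Summable.le_tsum hu m fun _ _ => sq_nonneg _
  have hpt : ∀ n, ‖goyB k₀ u v n‖ ^ 2 ≤
      A2 * bsq (n - 1) + A2 * bsq (n + 2) + A2 * bsq (n + 1) + A2 * bsq (n - 2) := by
    intro n
    have h := goyB_norm_le k₀ hk₀ u v hu0 n
    set t1 := ‖u (n+1)‖ * (kk k₀ (n-1) * ‖v (n-1)‖) with ht1
    set t2 := ‖u (n+1)‖ * (kk k₀ (n+2) * ‖v (n+2)‖) with ht2
    set t3 := ‖u (n+2)‖ * (kk k₀ (n+1) * ‖v (n+1)‖) with ht3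
    set t4 := ‖u (n-1)‖ * (kk k₀ (n-2) * ‖v (n-2)‖) with ht4
    have hb_eq : ∀ m, bsq m = (kk k₀ m * ‖v m‖) ^ 2 := fun m => (mul_pow _ _ _).symm
    have h2 : ‖goyB k₀ u v n‖ ^ 2 ≤ (1/2 * (t1 + t2 + t3 + t4)) ^ 2 := by
      apply pow_le_pow_left₀ (norm_nonneg _) h
    have hq1 : t1 ^ 2 ≤ A2 * bsq (n - 1) := by
      rw [ht1, mul_pow, hb_eq]
      exact mul_le_mul_of_nonneg_right (haj _) (sq_nonneg _)
    have hq2 : t2 ^ 2 ≤ A2 * bsq (n + 2) := by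
      rw [ht2, mul_pow, hb_eq]
      exact mul_le_mul_of_nonneg_right (haj _) (sq_nonneg _)
    have hq3 : t3 ^ 2 ≤ A2 * bsq (n + 1) := by
      rw [ht3, mul_pow, hb_eq]
      exact mul_le_mul_of_nonneg_right (haj _) (sq_nonneg _)
    have hq4 : t4 ^ 2 ≤ A2 * bsq (n - 2) := by
      rw [ht4, mul_pow, hb_eq]
      exact mul_le_mul_of_nonneg_right (haj _) (sq_nonneg _)
    nlinarith [h2, hq1, hq2, hq3, hq4, sq_nonneg (t1 - t2), sq_nonneg (t1 - t3),
      sq_nonneg (t1 - t4), sq_nonneg (t2 - t3), sq_nonneg (t2 - t4), sq_nonneg (t3 - t4)]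
  have hg : Summable (fun n => A2 * bsq (n - 1) + A2 * bsq (n + 2)
      + A2 * bsq (n + 1) + A2 * bsq (n - 2)) :=
    (((hb1.mul_left A2).add (hbp2.mul_left A2)).add (hbp1.mul_left A2)).add (hb2.mul_left A2)
  have hBsum : Summable (fun n => ‖goyB k₀ u v n‖ ^ 2) :=
    Summable.of_nonneg_of_le (fun n => sq_nonneg _) hpt hg
  refine ⟨hBsum, ?_⟩
  -- tsum bounds
  have key0 : bsq 0 ≤ B2 := Summable.le_tsum hbsq 0 fun j _ => hbsq_nonneg j
  have key1 : bsq 1 ≤ ∑' n, bsq (n + 1) := Summable.le_tsum hbp1 0 fun j _ => hbsq_nonneg _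
  have e0 : B2 = bsq 0 + ∑' n, bsq (n + 1) := Summable.tsum_eq_zero_add hbsq
  have hT3 : ∑' n, bsq (n + 1) ≤ B2 := by have := hbsq_nonneg 0; linarith
  have e1 : ∑' n, bsq (n + 1) = bsq 1 + ∑' n, bsq (n + 2) := by
    have := Summable.tsum_eq_zero_add hbp1
    simpa [add_assoc] using this
  have hT2 : ∑' n, bsq (n + 2) ≤ B2 := by
    have h1 : 0 ≤ bsq 1 := hbsq_nonneg 1
    linarith
  have hT1 : ∑' n, bsq (n - 1) ≤ 2 * B2 := by
    have e := Summable.tsum_eq_zero_add hb1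
    simp only [Nat.zero_sub, Nat.add_sub_cancel] at e
    rw [e]; linarith
  have hT4 : ∑' n, bsq (n - 2) ≤ 3 * B2 := by
    have e := Summable.tsum_eq_zero_add hb2
    have efun : (fun n => bsq (n + 1 - 2)) = fun n => bsq (n - 1) := by
      funext n; rfl
    rw [efun] at e
    have e' := Summable.tsum_eq_zero_add hb1
    simp only [Nat.zero_sub, Nat.add_sub_cancel] at e e'
    rw [e, e']; linarith
  have hsum_le : ∑' n, ‖goyB k₀ u v n‖ ^ 2 ≤ 7 * (A2 * B2) := by
    have step := Summable.tsum_le_tsum hpt hBsum hg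
    have expand : ∑' n, (A2 * bsq (n - 1) + A2 * bsq (n + 2)
        + A2 * bsq (n + 1) + A2 * bsq (n - 2))
        = A2 * ∑' n, bsq (n - 1) + A2 * ∑' n, bsq (n + 2)
          + A2 * ∑' n, bsq (n + 1) + A2 * ∑' n, bsq (n - 2) := by
      rw [Summable.tsum_add (((hb1.mul_left A2).add (hbp2.mul_left A2)).add (hbp1.mul_left A2))
        (hb2.mul_left A2),
        Summable.tsum_add ((hb1.mul_left A2).add (hbp2.mul_left A2)) (hbp1.mul_left A2),
        Summable.tsum_add (hb1.mul_left A2) (hbp2.mul_left A2),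
        tsum_mul_left, tsum_mul_left, tsum_mul_left, tsum_mul_left]
    rw [expand] at step
    nlinarith [mul_le_mul_of_nonneg_left hT1 hA2nn, mul_le_mul_of_nonneg_left hT2 hA2nn,
      mul_le_mul_of_nonneg_left hT3 hA2nn, mul_le_mul_of_nonneg_left hT4 hA2nn]
  calc Real.sqrt (∑' n, ‖goyB k₀ u v n‖ ^ 2) ≤ Real.sqrt (9 * (A2 * B2)) := by
        apply Real.sqrt_le_sqrt; nlinarith [mul_nonneg hA2nn hB2nn]
    _ = 3 * Real.sqrt A2 * Real.sqrt B2 := by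
        rw [show (9 : ℝ) * (A2 * B2) = 3 ^ 2 * (A2 * B2) by norm_num,
          Real.sqrt_mul (by positivity), Real.sqrt_sq (by norm_num : (0:ℝ) ≤ 3),
          Real.sqrt_mul hA2nn, mul_assoc]

end Aux

/-- `|B(u,v)| ≤ C₂ |u| ‖v‖` for `u ∈ H`, `v ∈ V`. -/
theorem stmt_3 (k₀ : ℝ) (hk₀ : 0 < k₀) :
    ∃ C₂ : ℝ, 0 < C₂ ∧ ∀ u v : ℕ → ℂ, u 0 = 0 → v 0 = 0 → memH u → memV k₀ v →
      memH (goyB k₀ u v) ∧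
      Real.sqrt (hnormSq (goyB k₀ u v)) ≤
        C₂ * Real.sqrt (hnormSq u) * Real.sqrt (vnormSq k₀ v) := by
  exact ⟨3, by norm_num, fun u v h0 h1 hu hv => stmt_3' k₀ hk₀ u v h0 h1 hu hv⟩
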